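/- Consider the game with state set K = {1,2} and payoff matrices M¹ = A¹ = [[1,1],[−1,−1]], M² = A² = [[−1,−1],[1,1]]. Writing q for the probability of state 1, the non-revealing value function satisfies v(q) = |2q − 1| for all q ∈ [0,1] and Cav(v)(q) = 1 for all q ∈ [0,1]. Moreover, the game does NOT satisfy property NR at p⁰ = (1/2, 1/2): there exist no p ∈ Δ(K) and φ ∈ ℝ^K satisfying conditions (1)–(3) of property NR at p⁰. -/

import Mathlib

open scoped BigOperators
open Finset

noncomputable section

/-- Value of the zero-sum matrix game with payoff matrix `M`:
`min_{t ∈ Δ(J)} max_{s ∈ Δ(I)} s M t`. -/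
def matrixValue {I J : Type*} [Fintype I] [Fintype J] (M : I → J → ℝ) : ℝ :=
  ⨅ t : (stdSimplex ℝ J), ⨆ s : (stdSimplex ℝ I),
    ∑ i, ∑ j, (s : I → ℝ) i * M i j * (t : J → ℝ) j

/-- The non-revealing value function `v^e(q)`, defined on all of `ℝ^K`. -/
def ve {K I J : Type*} [Fintype K] [Fintype I] [Fintype J]
    (M : K → I → J → ℝ) (q : K → ℝ) : ℝ :=
  matrixValue (fun i j => ∑ k, q k * M k i j)

/-- The concavification `Cav(v)(p)`: pointwise smallest concave majorant of `v` on the simplex. -/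
def cav {K : Type*} [Fintype K] (v : (K → ℝ) → ℝ) (p : K → ℝ) : ℝ :=
  sInf { y : ℝ | ∃ g : (K → ℝ) → ℝ,
    ConcaveOn ℝ (stdSimplex ℝ K) g ∧ (∀ q ∈ stdSimplex ℝ K, v q ≤ g q) ∧ y = g p }

/-- The affine parametrization `T : ℝ^{|K|-1} → ℝ^K`, `T 0 = e₁`, `T eᵢ = e_{i+1}`. -/
def Tmap (n : ℕ) (x : Fin n → ℝ) : Fin (n + 1) → ℝ :=
  Fin.cons (1 - ∑ i, x i) x

/-- The inverse of `T` on the affine hull of the simplex. -/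
def Tinv {n : ℕ} (p : Fin (n + 1) → ℝ) : Fin n → ℝ := fun i => p i.succ

/-- Pre-multiplication of the matrix `S` (linear part of `T`) by the row vector `φ`. -/
def rowS (n : ℕ) (φ : Fin (n + 1) → ℝ) : Fin n → ℝ := fun i => φ i.succ - φ 0

/-- Gradient of `f : ℝⁿ → ℝ` as a vector. -/
def grad {n : ℕ} (f : (Fin n → ℝ) → ℝ) (x : Fin n → ℝ) : Fin n → ℝ :=
  fun i => fderiv ℝ f x (Pi.single i 1)

/-- Clarke generalized gradient of `f` at `x`. -/
def clarkeGrad {n : ℕ} (f : (Fin n → ℝ) → ℝ) (x : Fin n → ℝ) : Set (Fin n → ℝ) :=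
  convexHull ℝ { L : Fin n → ℝ | ∃ u : ℕ → Fin n → ℝ,
    (∀ m, DifferentiableAt ℝ f (u m)) ∧
    Filter.Tendsto u Filter.atTop (nhds x) ∧
    Filter.Tendsto (fun m => grad f (u m)) Filter.atTop (nhds L) }

/-- The restricted superdifferential `∂*Cav(v)(p)`. -/
def restrictedSuperdiff {n : ℕ} (Cv : (Fin (n + 1) → ℝ) → ℝ) (p : Fin (n + 1) → ℝ) :
    Set (Fin n → ℝ) :=
  { w | ∀ h : Fin n → ℝ, Tmap n (Tinv p + h) ∈ stdSimplex ℝ (Fin (n + 1)) →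
      Cv (Tmap n (Tinv p + h)) ≤ Cv p + ∑ i, w i * h i }

/-- Property `NR` at `p⁰`. -/
def propNR {n : ℕ} {I J : Type*} [Fintype I] [Fintype J]
    (M : Fin (n + 1) → I → J → ℝ) (p0 : Fin (n + 1) → ℝ) : Prop :=
  ∃ p ∈ stdSimplex ℝ (Fin (n + 1)), ∃ φ : Fin (n + 1) → ℝ,
    (cav (ve M) p = ve M p ∧ ve M p = ∑ k, φ k * p k ∧
      cav (ve M) p0 = ∑ k, φ k * p0 k) ∧
    rowS n φ ∈ clarkeGrad (fun x => ve M (Tmap n x)) (Tinv p) ∧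
    rowS n φ ∈ restrictedSuperdiff (cav (ve M)) p

/-- The set `F` of feasible payoff vectors. -/
def Fset {K I J : Type*} [Fintype K] [Fintype I] [Fintype J]
    (M : K → I → J → ℝ) : Set (K → ℝ) :=
  convexHull ℝ { w : K → ℝ | ∃ i : I, ∃ j : J, w = fun k => M k i j }

/-- The set of non-revealing equilibrium payoffs `NR(p⁰)`. -/
def NRset {K I J : Type*} [Fintype K] [Fintype I] [Fintype J]
    (M : K → I → J → ℝ) (p0 : K → ℝ) : Set (K → ℝ) :=
  { φ | (∀ q ∈ stdSimplex ℝ K, ve M q ≤ ∑ k, φ k * q k) ∧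
        (∑ k, φ k * p0 k = cav (ve M) p0) ∧ φ ∈ Fset M }

/-- The game is locally non-revealing at `p`. -/
def locallyNR {K I J : Type*} [Fintype K] [Fintype I] [Fintype J]
    (M : K → I → J → ℝ) (p : K → ℝ) : Prop :=
  ∃ m : ℕ, ∃ α : Fin m → ℝ, ∃ ps : Fin m → K → ℝ,
    (∀ i, 0 < α i) ∧ (∑ i, α i = 1) ∧ (∀ i, ps i ∈ stdSimplex ℝ K) ∧
    (∑ i, α i • ps i = p) ∧ (cav (ve M) p = ∑ i, α i * ve M (ps i)) ∧
    (∃ i₀, ∀ k, 0 < ps i₀ k)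

end

noncomputable section

/-- The game of Example 3.2: `M¹ = [[1,1],[−1,−1]]`, `M² = [[−1,−1],[1,1]]`. -/
def Mex15 : Fin (1 + 1) → Fin 2 → Fin 2 → ℝ :=
  ![fun i j => !![(1:ℝ), 1; -1, -1] i j, fun i j => !![(-1:ℝ), -1; 1, 1] i j]

end


section Aux

lemma e0_mem15 : ![(1:ℝ),0] ∈ stdSimplex ℝ (Fin 2) := by
  constructor
  · intro i; fin_cases i <;> norm_num
  · simp [Fin.sum_univ_two]

lemma e1_mem15 : ![(0:ℝ),1] ∈ stdSimplex ℝ (Fin 2) := by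
  constructor
  · intro i; fin_cases i <;> norm_num
  · simp [Fin.sum_univ_two]

instance : Nonempty (stdSimplex ℝ (Fin 2)) := ⟨⟨_, e0_mem15⟩⟩

lemma ve_eq15 (q : Fin 2 → ℝ) : ve Mex15 q = |q 0 - q 1| := by
  set c := q 0 - q 1 with hc
  have hN : ∀ (s t : Fin 2 → ℝ),
      (∑ i, ∑ j, s i * (∑ k, q k * Mex15 k i j) * t j)
        = c * (s 0 - s 1) * (t 0 + t 1) := by
    intro s t
    simp [Fin.sum_univ_two, Mex15, Matrix.cons_val_zero, Matrix.cons_val_one, Matrix.head_cons]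
    ring
  have hbound : ∀ s ∈ stdSimplex ℝ (Fin 2), c * (s 0 - s 1) ≤ |c| := by
    intro s hs
    have h0 : 0 ≤ s 0 := hs.1 0
    have h1 : 0 ≤ s 1 := hs.1 1
    have hsum : s 0 + s 1 = 1 := by simpa [Fin.sum_univ_two] using hs.2
    nlinarith [le_abs_self c, neg_abs_le c, abs_nonneg c]
  have hsup : ∀ t : stdSimplex ℝ (Fin 2),
      (⨆ s : stdSimplex ℝ (Fin 2),
        ∑ i, ∑ j, (s : Fin 2 → ℝ) i * (∑ k, q k * Mex15 k i j) * (t : Fin 2 → ℝ) j) = |c| := by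
    intro t
    have ht : (t : Fin 2 → ℝ) 0 + (t : Fin 2 → ℝ) 1 = 1 := by
      have h := t.2.2; rw [Fin.sum_univ_two] at h; exact h
    have hBdd : BddAbove (Set.range fun s : stdSimplex ℝ (Fin 2) =>
        ∑ i, ∑ j, (s : Fin 2 → ℝ) i * (∑ k, q k * Mex15 k i j) * (t : Fin 2 → ℝ) j) := by
      refine ⟨|c|, ?_⟩
      rintro _ ⟨s, rfl⟩
      beta_reduce
      rw [hN, ht, mul_one]
      exact hbound s s.2
    apply le_antisymm
    · apply ciSup_le
      intro s
      rw [hN, ht, mul_one]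
      exact hbound s s.2
    · rcases le_or_gt 0 c with h | h
      · refine le_ciSup_of_le hBdd ⟨_, e0_mem15⟩ ?_
        rw [hN, ht, mul_one]
        simp [abs_of_nonneg h]
        show c ≤ c * ((1:ℝ) - 0); linarith
      · refine le_ciSup_of_le hBdd ⟨_, e1_mem15⟩ ?_
        rw [hN, ht, mul_one]
        simp [abs_of_neg h]
        show -c ≤ c * ((0:ℝ) - 1); linarith
  show matrixValue _ = |c|
  unfold matrixValue
  rw [iInf_congr hsup]
  exact ciInf_const

lemma cav_eq_one15 (v : (Fin 2 → ℝ) → ℝ) (hv : ∀ q ∈ stdSimplex ℝ (Fin 2), v q ≤ 1)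
    (hv0 : v ![1,0] = 1) (hv1 : v ![0,1] = 1)
    (p : Fin 2 → ℝ) (hp : p ∈ stdSimplex ℝ (Fin 2)) : cav v p = 1 := by
  have h0 : 0 ≤ p 0 := hp.1 0
  have h1 : 0 ≤ p 1 := hp.1 1
  have hsum : p 0 + p 1 = 1 := by simpa [Fin.sum_univ_two] using hp.2
  have hmem : (1 : ℝ) ∈ { y : ℝ | ∃ g : (Fin 2 → ℝ) → ℝ,
      ConcaveOn ℝ (stdSimplex ℝ (Fin 2)) g ∧ (∀ q ∈ stdSimplex ℝ (Fin 2), v q ≤ g q) ∧ y = g p } :=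
    ⟨fun _ => 1, concaveOn_const 1 (convex_stdSimplex ℝ (Fin 2)), fun q hq => hv q hq, rfl⟩
  have hlow : ∀ y ∈ { y : ℝ | ∃ g : (Fin 2 → ℝ) → ℝ,
      ConcaveOn ℝ (stdSimplex ℝ (Fin 2)) g ∧ (∀ q ∈ stdSimplex ℝ (Fin 2), v q ≤ g q) ∧ y = g p },
      (1:ℝ) ≤ y := by
    rintro y ⟨g, hg, hmaj, rfl⟩
    have hdecomp : p 0 • ![(1:ℝ),0] + p 1 • ![(0:ℝ),1] = p := by
      funext k; fin_cases k <;> simp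
    have := hg.2 e0_mem15 e1_mem15 h0 h1 hsum
    rw [hdecomp] at this
    have hge0 : (1:ℝ) ≤ g ![1,0] := hv0.symm.trans_le (hmaj _ e0_mem15)
    have hge1 : (1:ℝ) ≤ g ![0,1] := hv1.symm.trans_le (hmaj _ e1_mem15)
    have : p 0 * 1 + p 1 * 1 ≤ p 0 * g ![1,0] + p 1 * g ![0,1] := by
      gcongr
    simp only [smul_eq_mul] at *
    linarith
  exact le_antisymm (csInf_le ⟨1, hlow⟩ hmem) (le_csInf ⟨1, hmem⟩ hlow)

lemma clarke_subset15 {n : ℕ} {f : (Fin n → ℝ) → ℝ} {x c : Fin n → ℝ}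
    (h : ∀ᶠ y in nhds x, grad f y = c) : clarkeGrad f x ⊆ {c} := by
  refine convexHull_min ?_ (convex_singleton c)
  rintro L ⟨u, -, hu, hL⟩
  have hev : ∀ᶠ m in Filter.atTop, grad f (u m) = c := hu.eventually h
  have : Filter.Tendsto (fun m => grad f (u m)) Filter.atTop (nhds c) :=
    Filter.Tendsto.congr' (by filter_upwards [hev] with m hm using hm.symm)
      tendsto_const_nhds
  exact Set.mem_singleton_iff.mpr (tendsto_nhds_unique hL this)

lemma grad_affine15 (a b : ℝ) (y : Fin 1 → ℝ) :
    grad (fun x : Fin 1 → ℝ => a + b * x 0) y = fun _ => b := by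
  have hg : HasFDerivAt (fun x : Fin 1 → ℝ => a + b * x 0)
      ((0 : (Fin 1 → ℝ) →L[ℝ] ℝ) + b • (ContinuousLinearMap.proj 0 : (Fin 1 → ℝ) →L[ℝ] ℝ)) y :=
    (hasFDerivAt_const a y).add
      (((ContinuousLinearMap.proj (0 : Fin 1) : (Fin 1 → ℝ) →L[ℝ] ℝ).hasFDerivAt (x := y)).const_mul b)
  funext i
  have hi : i = 0 := Subsingleton.elim i 0
  show fderiv ℝ (fun x : Fin 1 → ℝ => a + b * x 0) y (Pi.single i 1) = b
  rw [hg.fderiv, hi]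
  simp

lemma grad_abs_lt15 {y : Fin 1 → ℝ} (hy : y 0 < 1/2) :
    grad (fun x : Fin 1 → ℝ => |1 - 2 * x 0|) y = fun _ => -2 := by
  have hU : IsOpen {z : Fin 1 → ℝ | z 0 < 1/2} :=
    isOpen_Iio.preimage (continuous_apply 0)
  have heq : (fun x : Fin 1 → ℝ => |1 - 2 * x 0|) =ᶠ[nhds y]
      (fun x : Fin 1 → ℝ => 1 + (-2) * x 0) := by
    filter_upwards [hU.mem_nhds hy] with z hz
    have hz' : z 0 < 1/2 := hz
    have : (0:ℝ) < 1 - 2 * z 0 := by linarith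
    rw [abs_of_pos this]; ring
  have : grad (fun x : Fin 1 → ℝ => |1 - 2 * x 0|) y
      = grad (fun x : Fin 1 → ℝ => 1 + (-2) * x 0) y := by
    funext i
    show fderiv ℝ _ y (Pi.single i 1) = fderiv ℝ _ y (Pi.single i 1)
    rw [heq.fderiv_eq]
  rw [this, grad_affine15]

lemma grad_abs_gt15 {y : Fin 1 → ℝ} (hy : 1/2 < y 0) :
    grad (fun x : Fin 1 → ℝ => |1 - 2 * x 0|) y = fun _ => 2 := by
  have hU : IsOpen {z : Fin 1 → ℝ | 1/2 < z 0} :=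
    isOpen_Ioi.preimage (continuous_apply 0)
  have heq : (fun x : Fin 1 → ℝ => |1 - 2 * x 0|) =ᶠ[nhds y]
      (fun x : Fin 1 → ℝ => -1 + 2 * x 0) := by
    filter_upwards [hU.mem_nhds hy] with z hz
    have hz' : 1/2 < z 0 := hz
    have : 1 - 2 * z 0 < 0 := by linarith
    rw [abs_of_neg this]; ring
  have : grad (fun x : Fin 1 → ℝ => |1 - 2 * x 0|) y
      = grad (fun x : Fin 1 → ℝ => -1 + 2 * x 0) y := by
    funext i
    show fderiv ℝ _ y (Pi.single i 1) = fderiv ℝ _ y (Pi.single i 1)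
    rw [heq.fderiv_eq]
  rw [this, grad_affine15]

lemma clarke_at_zero15 :
    clarkeGrad (fun x : Fin 1 → ℝ => |1 - 2 * x 0|) (fun _ => 0) ⊆ {fun _ => -2} := by
  apply clarke_subset15
  have hU : IsOpen {z : Fin 1 → ℝ | z 0 < 1/2} :=
    isOpen_Iio.preimage (continuous_apply 0)
  filter_upwards [hU.mem_nhds
    (by norm_num : ((fun _ => 0 : Fin 1 → ℝ)) ∈ {z : Fin 1 → ℝ | z 0 < 1/2})] with y hy
  exact grad_abs_lt15 hy

lemma clarke_at_one15 :
    clarkeGrad (fun x : Fin 1 → ℝ => |1 - 2 * x 0|) (fun _ => 1) ⊆ {fun _ => 2} := by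
  apply clarke_subset15
  have hU : IsOpen {z : Fin 1 → ℝ | 1/2 < z 0} :=
    isOpen_Ioi.preimage (continuous_apply 0)
  filter_upwards [hU.mem_nhds
    (by norm_num : ((fun _ => 1 : Fin 1 → ℝ)) ∈ {z : Fin 1 → ℝ | 1/2 < z 0})] with y hy
  exact grad_abs_gt15 hy

lemma ve_le_one15 : ∀ q ∈ stdSimplex ℝ (Fin 2), ve Mex15 q ≤ 1 := by
  intro q hq
  rw [ve_eq15]
  have h0 := hq.1 0
  have h1 := hq.1 1
  have hsum : q 0 + q 1 = 1 := by simpa [Fin.sum_univ_two] using hq.2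
  rw [abs_le]
  constructor <;> linarith

lemma hv0_15 : ve Mex15 ![1,0] = 1 := by rw [ve_eq15]; norm_num

lemma hv1_15 : ve Mex15 ![0,1] = 1 := by rw [ve_eq15]; norm_num

lemma hf15 : (fun x : Fin 1 → ℝ => ve Mex15 (Tmap 1 x)) = fun x => |1 - 2 * x 0| := by
  funext x
  rw [ve_eq15]
  have h0 : Tmap 1 x 0 = 1 - x 0 := by simp [Tmap, Fin.sum_univ_one]
  have h1 : Tmap 1 x 1 = x 0 := rfl
  rw [h0, h1]
  congr 1
  ring

end Aux

/-- for the game `Mex15`, writing `q` for the probability of state 1,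
`v(q) = |2q − 1|` and `Cav(v)(q) = 1` on `[0,1]`; moreover the game does NOT satisfy
property NR at `p⁰ = (1/2, 1/2)`. -/
theorem stmt_15 :
    (∀ q ∈ Set.Icc (0:ℝ) 1, ve Mex15 ![q, 1 - q] = |2 * q - 1|) ∧
    (∀ q ∈ Set.Icc (0:ℝ) 1, cav (ve Mex15) ![q, 1 - q] = 1) ∧
    ¬ propNR Mex15 ![1/2, 1/2] := by
  have hsimp : ∀ q : ℝ, q ∈ Set.Icc (0:ℝ) 1 → ![q, 1 - q] ∈ stdSimplex ℝ (Fin 2) := by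
    intro q hq
    obtain ⟨hq0, hq1⟩ := hq
    constructor
    · intro i; fin_cases i <;> simp <;> linarith
    · simp [Fin.sum_univ_two]
  refine ⟨?_, ?_, ?_⟩
  · intro q hq
    rw [ve_eq15]
    rw [show (![q, 1 - q] : Fin 2 → ℝ) 0 = q from rfl,
        show (![q, 1 - q] : Fin 2 → ℝ) 1 = 1 - q from rfl]
    congr 1
    ring
  · intro q hq
    exact cav_eq_one15 (ve Mex15) ve_le_one15 hv0_15 hv1_15 _ (hsimp q hq)
  · rintro ⟨p, hp, φ, ⟨h1a, h1b, h1c⟩, h2, -⟩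
    have hp0 : 0 ≤ p 0 := hp.1 0
    have hp1 : 0 ≤ p 1 := hp.1 1
    have hpsum : p 0 + p 1 = 1 := by simpa [Fin.sum_univ_two] using hp.2
    have hhalf : (![1/2, 1/2] : Fin 2 → ℝ) ∈ stdSimplex ℝ (Fin 2) := by
      have := hsimp (1/2) (by norm_num)
      convert this using 2
      norm_num
    have hcavp : cav (ve Mex15) p = 1 :=
      cav_eq_one15 (ve Mex15) ve_le_one15 hv0_15 hv1_15 p hp
    have hcavh : cav (ve Mex15) ![1/2, 1/2] = 1 :=
      cav_eq_one15 (ve Mex15) ve_le_one15 hv0_15 hv1_15 _ hhalf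
    have habs : |p 0 - p 1| = 1 := by
      rw [ve_eq15] at h1a
      rw [hcavp] at h1a
      exact h1a.symm
    have hphis : φ 0 / 2 + φ 1 / 2 = 1 := by
      rw [hcavh] at h1c
      rw [Fin.sum_univ_two] at h1c
      rw [show (![(1:ℝ)/2, 1/2] : Fin 2 → ℝ) 0 = 1/2 from rfl,
          show (![(1:ℝ)/2, 1/2] : Fin 2 → ℝ) 1 = 1/2 from rfl] at h1c
      linarith
    have hvp : |p 0 - p 1| = φ 0 * p 0 + φ 1 * p 1 := by
      rw [ve_eq15, Fin.sum_univ_two] at h1b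
      exact h1b
    rcases (abs_eq (by norm_num : (0:ℝ) ≤ 1)).mp habs with hd | hd
    · -- p = e₀ : p 0 = 1, p 1 = 0
      have hpe0 : p 0 = 1 := by linarith
      have hpe1 : p 1 = 0 := by linarith
      have hφ0 : φ 0 = 1 := by
        rw [hpe0, hpe1] at hvp
        norm_num at hvp
        linarith
      have hφ1 : φ 1 = 1 := by linarith
      have hTinv : Tinv p = (fun _ => 0 : Fin 1 → ℝ) := by
        funext i
        have hi : i = 0 := Subsingleton.elim i 0
        subst hi
        exact hpe1
      rw [hf15, hTinv] at h2
      have hval : rowS 1 φ = (fun _ => -2 : Fin 1 → ℝ) := clarke_at_zero15 h2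
      have := congrFun hval 0
      have hrow : φ 1 - φ 0 = -2 := this
      linarith
    · -- p = e₁ : p 0 = 0, p 1 = 1
      have hpe0 : p 0 = 0 := by linarith
      have hpe1 : p 1 = 1 := by linarith
      have hφ1 : φ 1 = 1 := by
        rw [hpe0, hpe1] at hvp
        norm_num at hvp
        linarith
      have hφ0 : φ 0 = 1 := by linarith
      have hTinv : Tinv p = (fun _ => 1 : Fin 1 → ℝ) := by
        funext i
        have hi : i = 0 := Subsingleton.elim i 0
        subst hi
        exact hpe1
      rw [hf15, hTinv] at h2
      have hval : rowS 1 φ = (fun _ => 2 : Fin 1 → ℝ) := clarke_at_one15 h2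
      have := congrFun hval 0
      have hrow : φ 1 - φ 0 = 2 := this
      linarith
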